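/- Let A, B ⊆ R_n be complete defining sets of cyclic codes C_A and C_B of length n over F_q (i.e., their exponent sets are unions of q-cyclotomic cosets mod n), and suppose d_A⊥ > d_B, where d_A⊥ is the minimum distance of the dual of C_A and d_B is the minimum distance of C_B. Then the cyclic code C_{AB} of length n over F_q with complete defining set AB = {ab : a ∈ A, b ∈ B} has (d_A⊥ - d_B + 1, d_B)-locality. -/

import Mathlib

noncomputable section

open Polynomial
open scoped Pointwise

/-- The cyclic code of length `n` over `K` whose complete defining set is `Z ⊆ L`,
where `L` is an extension of `K` containing the `n`-th roots of unity:
codewords are those `c` whose associated polynomial vanishes on `Z`. -/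
def cyclicCodeOn (K L : Type) [Field K] [Field L] [Algebra K L]
    (n : ℕ) (Z : Set L) : Submodule K (Fin n → K) where
  carrier := {c | ∀ β ∈ Z, ∑ i : Fin n, algebraMap K L (c i) * β ^ (i : ℕ) = 0}
  add_mem' := by
    intro a b ha hb β hβ
    simp only [Pi.add_apply, map_add, add_mul, Finset.sum_add_distrib]
    rw [ha β hβ, hb β hβ, add_zero]
  zero_mem' := by intro β hβ; simp
  smul_mem' := by
    intro r a ha β hβ
    simp only [Pi.smul_apply, smul_eq_mul, map_mul, mul_assoc, ← Finset.mul_sum]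
    rw [ha β hβ, mul_zero]

/-- Cyclic code of length `n` over `F` with complete defining set `Z ⊆ F`. -/
abbrev cyclicCode (F : Type) [Field F] (n : ℕ) (Z : Set F) : Submodule F (Fin n → F) :=
  cyclicCodeOn F F n Z

/-- The dual code of a code `C ⊆ F^n` (under the standard inner product). -/
def dualSet (F : Type) [Field F] (n : ℕ) (C : Set (Fin n → F)) : Set (Fin n → F) :=
  {v | ∀ c ∈ C, ∑ i : Fin n, v i * c i = 0}

open Classical in
/-- Hamming weight of a vector. -/
def wt {F : Type} [Zero F] {n : ℕ} (c : Fin n → F) : ℕ :=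
  (Finset.univ.filter (fun i => c i ≠ 0)).card

/-- `d` is the minimum Hamming distance (= minimum nonzero weight) of the code `C`. -/
def IsMinDist {F : Type} [Zero F] {n : ℕ} (C : Set (Fin n → F)) (d : ℕ) : Prop :=
  (∃ c ∈ C, c ≠ 0 ∧ wt c = d) ∧ ∀ c ∈ C, c ≠ 0 → d ≤ wt c

open Classical in
/-- `C` has `(r, δ)`-locality: every coordinate lies in a recovery set `S` of size
at most `r + δ - 1` such that the punctured code `C|_S` has minimum distance `≥ δ`. -/
def HasLocality {F : Type} [Zero F] {n : ℕ} (C : Set (Fin n → F)) (r δ : ℕ) : Prop :=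
  ∀ i : Fin n, ∃ S : Finset (Fin n), i ∈ S ∧ S.card ≤ r + δ - 1 ∧
    ∀ c ∈ C, ∀ c' ∈ C, (∃ j ∈ S, c j ≠ c' j) →
      δ ≤ (S.filter (fun j => c j ≠ c' j)).card

/-- The polynomial `c₀ + c₁ x + ⋯ + c_{n-1} x^{n-1}` associated to a vector. -/
def vecPoly {F : Type} [Semiring F] {n : ℕ} (c : Fin n → F) : Polynomial F :=
  ∑ i : Fin n, Polynomial.C (c i) * Polynomial.X ^ (i : ℕ)

/-- The cyclic code of length `n` generated by `g(x)` (a divisor of `x^n - 1`). -/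
def codeOfGen (F : Type) [Field F] (n : ℕ) (g : Polynomial F) : Set (Fin n → F) :=
  {c | g ∣ vecPoly c}

/-- Ceiling division `⌈a / b⌉` on naturals. -/
def ceilDiv' (a b : ℕ) : ℕ := (a + b - 1) / b

/-- The code parameters meet the Singleton-like bound for `(r, δ)`-LRCs:
`d = n - k - (⌈k/r⌉ - 1)(δ - 1) + 1`. -/
def SingletonOpt (n k r δ d : ℕ) : Prop :=
  d = n - k - (ceilDiv' k r - 1) * (δ - 1) + 1

set_option linter.unusedSectionVars false



lemma geomSumZero {L : Type} [Field L] {μ : L} {n : ℕ} (h1 : μ ^ n = 1) (h2 : μ ≠ 1) :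
    ∑ k ∈ Finset.range n, μ ^ k = 0 := by
  have h := geom_sum_mul μ n
  rw [h1, sub_self] at h
  rcases mul_eq_zero.1 h with h | h
  · exact h
  · exact absurd (sub_eq_zero.1 h) h2

lemma powModN {M : Type} [Monoid M] {β : M} {n : ℕ} (h : β ^ n = 1) (a : ℕ) :
    β ^ a = β ^ (a % n) := by
  conv_lhs => rw [← Nat.div_add_mod a n]
  rw [pow_add, pow_mul, h, one_pow, one_mul]

section KL
variable {K L : Type} [Field K] [Fintype K] [Field L] [Algebra K L]

lemma algFix (k : K) :
    (algebraMap K L k) ^ (Fintype.card K) = algebraMap K L k := by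
  rw [← map_pow, FiniteField.pow_card]

lemma fixPow {x : L} (h : x ^ Fintype.card K = x) (t : ℕ) :
    x ^ (Fintype.card K) ^ t = x := by
  induction t with
  | zero => simp
  | succ t ih => rw [pow_succ, pow_mul, ih, h]

lemma memRangeOfFix {x : L} (h : x ^ Fintype.card K = x) :
    x ∈ Set.range (algebraMap K L) := by
  classical
  by_contra hx
  set q := Fintype.card K with hqdef
  have hq2 : 1 < q := Fintype.one_lt_card
  set P : L[X] := X ^ q - X with hP
  have hPne : P ≠ 0 := FiniteField.X_pow_card_sub_X_ne_zero L hq2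
  set S : Finset L := insert x (Finset.univ.image (algebraMap K L)) with hS
  have hxim : x ∉ Finset.univ.image (algebraMap K L) := by
    simp only [Finset.mem_image, Finset.mem_univ, true_and]
    rintro ⟨k, rfl⟩
    exact hx ⟨k, rfl⟩
  have hcard : S.card = q + 1 := by
    rw [hS, Finset.card_insert_of_notMem hxim,
      Finset.card_image_of_injective _ (algebraMap K L).injective, Finset.card_univ]
  have hsub : S.val ⊆ P.roots := by
    intro y hy
    rw [Polynomial.mem_roots hPne]
    have hyq : y ^ q = y := by
      rcases Finset.mem_insert.1 hy with rfl | hy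
      · exact h
      · simp only [Finset.mem_image, Finset.mem_univ, true_and] at hy
        rcases hy with ⟨k, rfl⟩
        exact algFix k
    simp [hP, IsRoot, hyq]
  have h1 := Polynomial.card_le_degree_of_subset_roots hsub
  have h2 : P.natDegree ≤ q := by
    refine le_trans (Polynomial.natDegree_sub_le _ _) ?_
    simp only [natDegree_X_pow, natDegree_X]
    omega
  omega

end KL

section Shift
variable {K L : Type} [Field K] [Fintype K] [Field L] [Algebra K L]
variable {n : ℕ} [NeZero n]

lemma shiftFin {Z : Set L} (hZ : Z ⊆ {x : L | x ^ n = 1}) {c : Fin n → K}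
    (hc : c ∈ cyclicCodeOn K L n Z) (t : Fin n) :
    (fun j => c (j + t)) ∈ cyclicCodeOn K L n Z := by
  intro β hβ
  have hβn : β ^ n = 1 := hZ hβ
  have hn0 : n ≠ 0 := NeZero.ne n
  have hβ0 : β ≠ 0 := by
    intro h; rw [h, zero_pow hn0] at hβn; exact zero_ne_one hβn
  have key : β ^ (t : ℕ) * ∑ j : Fin n, algebraMap K L (c (j + t)) * β ^ (j : ℕ)
      = ∑ i : Fin n, algebraMap K L (c i) * β ^ (i : ℕ) := by
    rw [Finset.mul_sum]
    refine Fintype.sum_equiv (Equiv.addRight t)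
      (fun j => β ^ (t : ℕ) * (algebraMap K L (c (j + t)) * β ^ (j : ℕ)))
      (fun i => algebraMap K L (c i) * β ^ (i : ℕ)) ?_
    intro j
    simp only [Equiv.coe_addRight]
    have hv : ((j + t : Fin n) : ℕ) = ((j : ℕ) + (t : ℕ)) % n := by
      rw [Fin.add_def]
    have : β ^ ((j + t : Fin n) : ℕ) = β ^ ((j : ℕ) + (t : ℕ)) := by
      rw [hv, ← powModN hβn]
    rw [this, pow_add]; ring
  have h0 := hc β hβ
  rw [h0] at key
  rcases mul_eq_zero.1 key with h | h
  · exact absurd h (pow_ne_zero _ hβ0)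
  · exact h

lemma shiftDual {Z : Set L} (hZ : Z ⊆ {x : L | x ^ n = 1}) {w : Fin n → K}
    (hw : w ∈ dualSet K n (cyclicCodeOn K L n Z : Set (Fin n → K))) (t : Fin n) :
    (fun j => w (j + t)) ∈ dualSet K n (cyclicCodeOn K L n Z : Set (Fin n → K)) := by
  intro c hc
  have h2 : (fun j => c (j - t)) ∈ cyclicCodeOn K L n Z := by
    have := shiftFin hZ (SetLike.mem_coe.1 hc) (-t)
    simpa [sub_eq_add_neg] using this
  have h0 := hw _ (SetLike.mem_coe.2 h2)
  rw [← h0]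
  refine Fintype.sum_equiv (Equiv.addRight t)
    (fun j => w (j + t) * c j) (fun i => w i * c (i - t)) ?_
  intro j
  simp only [Equiv.coe_addRight, add_sub_cancel_right]

end Shift

section Van
variable {K L : Type} [Field K] [Fintype K] [Field L] [Algebra K L]

lemma qPowInj : Function.Injective (fun x : L => x ^ Fintype.card K) := by
  obtain ⟨p, hpK⟩ := CharP.exists K
  haveI := hpK
  obtain ⟨f, hp, hcard⟩ := FiniteField.card K p
  haveI := Fact.mk hp
  haveI : CharP L p := charP_of_injective_algebraMap (algebraMap K L).injective p
  intro a b hab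
  simp only at hab
  have h : (a - b) ^ Fintype.card K = 0 := by
    rw [hcard] at hab ⊢
    rw [sub_pow_char_pow, hab, sub_self]
  have := pow_eq_zero_iff (Fintype.card_ne_zero (α := K)) |>.1 h
  exact sub_eq_zero.1 this

lemma notMemQPowIter {n : ℕ} (hn : 0 < n) {A : Set L} (hAsub : A ⊆ {x : L | x ^ n = 1})
    (hA : ∀ x ∈ A, x ^ Fintype.card K ∈ A) {γ : L} (hγA : γ ∉ A) (t : ℕ) :
    γ ^ (Fintype.card K) ^ t ∉ A := by
  have hAfin : A.Finite := by
    refine Set.Finite.subset (Polynomial.finite_setOf_isRoot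
      (Polynomial.X_pow_sub_C_ne_zero hn (1 : L))) ?_
    intro x hx
    have := hAsub hx
    simp only [Set.mem_setOf_eq] at this ⊢
    simp [Polynomial.IsRoot, sub_eq_zero, this]
  have step : ∀ y : L, y ∉ A → y ^ Fintype.card K ∉ A := by
    intro y hy h
    have hbij := (hAfin.injOn_iff_bijOn_of_mapsTo (fun x hx => hA x hx)).1
      (qPowInj (K := K) (L := L)).injOn
    obtain ⟨a, haA, ha⟩ := hbij.2.2 h
    exact hy (qPowInj ha ▸ haA)
  induction t with
  | zero => simpa using hγA
  | succ t ih =>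
    have : γ ^ (Fintype.card K) ^ (t + 1) = (γ ^ (Fintype.card K) ^ t) ^ Fintype.card K := by
      rw [← pow_mul, pow_succ]
    rw [this]
    exact step _ ih

end Van
section Van2
variable {K L : Type} [Field K] [Fintype K] [Field L] [Algebra K L]

lemma dualVanish {n : ℕ} (hn : 0 < n) (hcop : Nat.Coprime n (Fintype.card K))
    {A : Set L} (hAsub : A ⊆ {x : L | x ^ n = 1}) (hA : ∀ x ∈ A, x ^ Fintype.card K ∈ A)
    {w : Fin n → K} (hw : w ∈ dualSet K n (cyclicCodeOn K L n A : Set (Fin n → K)))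
    {γ : L} (hγn : γ ^ n = 1) (hγA : γ ∉ A) :
    ∑ j : Fin n, algebraMap K L (w j) * (γ⁻¹) ^ (j : ℕ) = 0 := by
  classical
  by_contra hzne
  set q := Fintype.card K with hq
  have hq2 : 1 < q := Fintype.one_lt_card
  obtain ⟨p, hpK⟩ := CharP.exists K
  haveI := hpK
  obtain ⟨f, hp, hcard⟩ := FiniteField.card K p
  haveI := Fact.mk hp
  haveI : CharP L p := charP_of_injective_algebraMap (algebraMap K L).injective p
  haveI : ExpChar L p := ExpChar.prime hp
  set d := n.totient with hd
  have hd0 : d ≠ 0 := (Nat.totient_pos.2 hn).ne'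
  have hmod : q ^ d ≡ 1 [MOD n] := Nat.ModEq.pow_totient hcop.symm
  have hfixroot : ∀ x : L, x ^ n = 1 → x ^ q ^ d = x := by
    intro x hx
    calc x ^ q ^ d = x ^ (q ^ d % n) := powModN hx _
      _ = x ^ (1 % n) := by rw [hmod]
      _ = x ^ 1 := (powModN hx 1).symm
      _ = x := pow_one x
  have hqpf : ∀ t : ℕ, q ^ t = p ^ (f * t) := by
    intro t; rw [hq, hcard, ← pow_mul]
  set F0 : Subalgebra K L :=
    { carrier := {x : L | x ^ q ^ d = x}
      mul_mem' := fun {x y} hx hy => by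
        simp only [Set.mem_setOf_eq] at *
        rw [mul_pow, hx, hy]
      add_mem' := fun {x y} hx hy => by
        simp only [Set.mem_setOf_eq] at *
        rw [hqpf d, add_pow_char_pow, ← hqpf d, hx, hy]
      algebraMap_mem' := fun k => fixPow (algFix k) d } with hF0
  have hmemF0 : ∀ x : L, x ∈ F0 ↔ x ^ q ^ d = x := fun x => Iff.rfl
  have hfinF : (F0 : Set L).Finite := by
    refine Set.Finite.subset (Polynomial.finite_setOf_isRoot
      (FiniteField.X_pow_card_pow_sub_X_ne_zero L hd0 hq2)) ?_
    intro x hx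
    have hx' : x ^ q ^ d = x := hx
    simp [Set.mem_setOf_eq, Polynomial.IsRoot, sub_eq_zero, hx']
  haveI : Finite F0 := hfinF.to_subtype
  haveI : Fintype F0 := Fintype.ofFinite _
  set Q := Fintype.card F0 with hQdef
  set s := Module.finrank K F0 with hs
  have hQs : Q = q ^ s := Module.card_eq_pow_finrank
  have hQ2 : 2 ≤ Q := by
    haveI : Nontrivial F0 := ⟨⟨0, 1, by
      intro h
      have := congrArg (Subtype.val) h
      simpa using this⟩⟩
    exact Fintype.one_lt_card
  have hs1 : 1 ≤ s := by
    rcases Nat.eq_zero_or_pos s with h | h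
    · rw [h, pow_zero] at hQs; omega
    · exact h
  letI : Field F0 := (Finite.isField_of_domain F0).toField
  have hpowQ : ∀ x : L, x ^ q ^ d = x → x ^ Q = x := by
    intro x hx
    have h2 := FiniteField.pow_card (⟨x, hx⟩ : F0)
    have := congrArg Subtype.val h2
    rwa [SubmonoidClass.coe_pow] at this
  -- basic members
  have hγ0 : γ ≠ 0 := by
    intro h; rw [h, zero_pow hn.ne'] at hγn; exact zero_ne_one hγn
  have hγF : γ ^ q ^ d = γ := hfixroot γ hγn
  have hγinvF : (γ⁻¹) ^ q ^ d = γ⁻¹ := by rw [inv_pow, hγF]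
  have hwfix : ∀ j : Fin n, (algebraMap K L (w j)) ^ q ^ d = algebraMap K L (w j) :=
    fun j => fixPow (algFix _) d
  set z := ∑ j : Fin n, algebraMap K L (w j) * (γ⁻¹) ^ (j : ℕ) with hz
  have hzF : z ^ q ^ d = z := by
    have : z ∈ F0 := Subalgebra.sum_mem _ (fun j _ =>
      mul_mem ((hmemF0 _).2 (hwfix j)) (pow_mem ((hmemF0 _).2 hγinvF) _))
    exact this
  have hγt : ∀ t : ℕ, γ ^ q ^ t ∉ A := notMemQPowIter hn hAsub hA hγA
  -- key1
  have key1 : ∀ lam : L, lam ^ q ^ d = lam →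
      ∑ t ∈ Finset.range s, (lam * z) ^ q ^ t = 0 := by
    intro lam hlam
    set g := γ⁻¹ with hg
    set e : Fin n → L := fun j => ∑ t ∈ Finset.range s, (lam * g ^ (j : ℕ)) ^ q ^ t with he
    have hyF : ∀ j : Fin n, (lam * g ^ (j : ℕ)) ^ q ^ d = lam * g ^ (j : ℕ) := by
      intro j
      rw [mul_pow, hlam, pow_right_comm, hγinvF]
    have hefix : ∀ j, (e j) ^ q = e j := by
      intro j
      set y := lam * g ^ (j : ℕ) with hy
      have h1 : (e j) ^ q = ∑ t ∈ Finset.range s, (y ^ q ^ t) ^ q := by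
        have he' : e j = ∑ t ∈ Finset.range s, y ^ q ^ t := rfl
        rw [he', hq, hcard, sum_pow_char_pow, ← hcard, ← hq]
      have h2 : ∀ t, (y ^ q ^ t) ^ q = y ^ q ^ (t + 1) := by
        intro t; rw [← pow_mul, ← pow_succ]
      have h3 : ∑ t ∈ Finset.range s, y ^ q ^ (t + 1) + y ^ q ^ 0
          = ∑ t ∈ Finset.range s, y ^ q ^ t + y ^ q ^ s :=
        (Finset.sum_range_succ' (fun t => y ^ q ^ t) s).symm.trans
          (Finset.sum_range_succ (fun t => y ^ q ^ t) s)
      have h4 : y ^ q ^ s = y ^ q ^ 0 := by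
        rw [pow_zero, pow_one, ← hQs]
        exact hpowQ y (hyF j)
      rw [h1]
      rw [Finset.sum_congr rfl (fun t _ => h2 t)]
      rw [h4] at h3
      exact add_right_cancel h3
    have hcK : ∀ j, ∃ k : K, algebraMap K L k = e j := by
      intro j
      obtain ⟨k, hk⟩ := memRangeOfFix (hefix j)
      exact ⟨k, hk⟩
    choose c hc using hcK
    have hcmem : c ∈ cyclicCodeOn K L n A := by
      intro β hβ
      have hβn : β ^ n = 1 := hAsub hβ
      have hterm : ∀ j : Fin n, algebraMap K L (c j) * β ^ (j : ℕ)
          = ∑ t ∈ Finset.range s, lam ^ q ^ t * (g ^ q ^ t * β) ^ (j : ℕ) := by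
        intro j
        rw [show (algebraMap K L) (c j) = ∑ t ∈ Finset.range s, (lam * g ^ (j : ℕ)) ^ q ^ t
          from hc j, Finset.sum_mul]
        refine Finset.sum_congr rfl (fun t _ => ?_)
        rw [mul_pow lam, pow_right_comm g, mul_pow (g ^ q ^ t) β]
        ring
      rw [Finset.sum_congr rfl (fun j _ => hterm j), Finset.sum_comm]
      refine Finset.sum_eq_zero (fun t _ => ?_)
      rw [← Finset.mul_sum]
      set μ := g ^ q ^ t * β with hμ
      have hgn1 : g ^ n = 1 := by rw [hg, inv_pow, hγn, inv_one]
      have hμn : μ ^ n = 1 := by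
        have hgt : (g ^ q ^ t) ^ n = 1 := by rw [pow_right_comm, hgn1, one_pow]
        rw [hμ, mul_pow, hgt, one_mul, hβn]
      have hμ1 : μ ≠ 1 := by
        intro h
        apply hγt t
        have ha : (γ ^ q ^ t) ≠ 0 := pow_ne_zero _ hγ0
        have hqg : g ^ q ^ t = (γ ^ q ^ t)⁻¹ := by rw [hg, inv_pow]
        rw [hμ, hqg] at h
        have hβeq : β = γ ^ q ^ t := by
          calc β = (γ ^ q ^ t) * ((γ ^ q ^ t)⁻¹ * β) := by
                rw [← mul_assoc, mul_inv_cancel₀ ha, one_mul]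
            _ = γ ^ q ^ t := by rw [h, mul_one]
        exact hβeq ▸ hβ
      have : ∑ j : Fin n, μ ^ (j : ℕ) = 0 := by
        rw [Fin.sum_univ_eq_sum_range (fun m => μ ^ m) n]
        exact geomSumZero hμn hμ1
      rw [this, mul_zero]
    have h0 := hw c (SetLike.mem_coe.2 hcmem)
    have h0L : ∑ j : Fin n, algebraMap K L (w j) * e j = 0 := by
      have := congrArg (algebraMap K L) h0
      rw [map_sum, map_zero] at this
      simpa only [map_mul, hc] using this
    have hzq : ∀ t : ℕ, (lam * z) ^ q ^ t
        = ∑ j : Fin n, algebraMap K L (w j) * (lam * g ^ (j : ℕ)) ^ q ^ t := by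
      intro t
      rw [mul_pow, hz]
      rw [show (q : ℕ) ^ t = p ^ (f * t) from hqpf t]
      rw [sum_pow_char_pow, Finset.mul_sum]
      refine Finset.sum_congr rfl (fun j _ => ?_)
      rw [mul_pow, mul_pow, ← hqpf t, fixPow (algFix (w j)) t]
      ring
    rw [Finset.sum_congr rfl (fun t _ => hzq t), Finset.sum_comm]
    rw [← h0L]
    refine Finset.sum_congr rfl (fun j _ => ?_)
    rw [he, ← Finset.mul_sum]
  -- key2
  have hzQ : z ^ Q = z := hpowQ z hzF
  have hzQ1 : z ^ (Q - 1) = 1 := by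
    have h : z ^ (Q - 1) * z = 1 * z := by
      rw [← pow_succ, Nat.sub_add_cancel (by omega), hzQ, one_mul]
    exact mul_right_cancel₀ hzne h
  have key2 : ∀ y : L, y ^ q ^ d = y → ∑ t ∈ Finset.range s, y ^ q ^ t = 0 := by
    intro y hy
    set lam := y * z ^ (Q - 2) with hlam
    have hlamF : lam ^ q ^ d = lam := by
      rw [hlam, mul_pow, hy, pow_right_comm, hzF]
    have h := key1 lam hlamF
    have hly : lam * z = y := by
      rw [hlam, mul_assoc, ← pow_succ, show Q - 2 + 1 = Q - 1 by omega, hzQ1, mul_one]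
    rwa [hly] at h
  -- polynomial contradiction
  set P : Polynomial L := ∑ t ∈ Finset.range s, Polynomial.X ^ q ^ t with hP
  have hcoeff : P.coeff (q ^ (s - 1)) = 1 := by
    rw [hP, Polynomial.finset_sum_coeff]
    have hterm : ∀ t ∈ Finset.range s,
        ((Polynomial.X : Polynomial L) ^ q ^ t).coeff (q ^ (s - 1))
          = if t = s - 1 then 1 else 0 := by
      intro t ht
      rw [Polynomial.coeff_X_pow]
      by_cases h : t = s - 1
      · simp [h]
      · have : q ^ (s - 1) ≠ q ^ t := fun hc =>
          h (Nat.pow_right_injective hq2 hc).symm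
        simp [this, h]
    rw [Finset.sum_congr rfl hterm, Finset.sum_ite_eq' (Finset.range s) (s - 1)]
    simp only [Finset.mem_range, if_pos (by omega : s - 1 < s)]
  have hPne : P ≠ 0 := by
    intro h0
    rw [h0, Polynomial.coeff_zero] at hcoeff
    exact zero_ne_one hcoeff
  have hroots : ∀ y : L, y ^ q ^ d = y → P.IsRoot y := by
    intro y hy
    have := key2 y hy
    simp only [hP, Polynomial.IsRoot, Polynomial.eval_finset_sum, Polynomial.eval_pow,
      Polynomial.eval_X]
    exact this
  set SF : Finset L := Finset.univ.image (fun x : F0 => (x : L)) with hSF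
  have hSFcard : SF.card = Q := by
    rw [hSF, Finset.card_image_of_injective _ Subtype.val_injective, Finset.card_univ]
  have hsub : SF.val ⊆ P.roots := by
    intro y hy
    rw [Polynomial.mem_roots hPne]
    have hy' : y ∈ SF := hy
    rw [hSF, Finset.mem_image] at hy'
    obtain ⟨x, _, rfl⟩ := hy'
    exact hroots _ x.2
  have h1 := Polynomial.card_le_degree_of_subset_roots hsub
  have h2 : P.natDegree ≤ q ^ (s - 1) := by
    rw [hP]
    refine Polynomial.natDegree_sum_le_of_forall_le _ _ (fun t ht => ?_)
    rw [Polynomial.natDegree_X_pow]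
    exact Nat.pow_le_pow_right (by omega) (by
      simp only [Finset.mem_range] at ht; omega)
  have h3 : q ^ (s - 1) < q ^ s := Nat.pow_lt_pow_right hq2 (by omega)
  omega

end Van2

section Prod
variable {K L : Type} [Field K] [Fintype K] [Field L] [Algebra K L]

lemma prodMemB {n : ℕ} (hn : 0 < n) (hcop : Nat.Coprime n (Fintype.card K))
    {α : L} (hα : IsPrimitiveRoot α n)
    {A B : Set L} (hAsub : A ⊆ {x : L | x ^ n = 1}) (hBsub : B ⊆ {x : L | x ^ n = 1})
    (hA : ∀ x ∈ A, x ^ Fintype.card K ∈ A)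
    {w e : Fin n → K}
    (hw : w ∈ dualSet K n (cyclicCodeOn K L n A : Set (Fin n → K)))
    (he : e ∈ cyclicCodeOn K L n (A * B)) :
    (fun j => w j * e j) ∈ cyclicCodeOn K L n B := by
  classical
  intro β hβ
  show ∑ j : Fin n, (algebraMap K L) (w j * e j) * β ^ (j : ℕ) = 0
  have hβn : β ^ n = 1 := hBsub hβ
  have hβ0 : β ≠ 0 := by
    intro h; rw [h, zero_pow hn.ne'] at hβn; exact zero_ne_one hβn
  have hαn : α ^ n = 1 := hα.pow_eq_one
  have hα0 : α ≠ 0 := by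
    intro h; rw [h, zero_pow hn.ne'] at hαn; exact zero_ne_one hαn
  obtain ⟨p, hpK⟩ := CharP.exists K
  haveI := hpK
  obtain ⟨f, hp, hcard⟩ := FiniteField.card K p
  haveI := Fact.mk hp
  haveI : CharP L p := charP_of_injective_algebraMap (algebraMap K L).injective p
  have hnL : (n : L) ≠ 0 := by
    rw [Ne, CharP.cast_eq_zero_iff L p n]
    intro hdvd
    have hpq : p ∣ Fintype.card K := hcard ▸ dvd_pow_self p f.pos.ne'
    have h1 : p ∣ Nat.gcd n (Fintype.card K) := Nat.dvd_gcd hdvd hpq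
    rw [Nat.Coprime.gcd_eq_one hcop] at h1
    exact hp.one_lt.ne' (Nat.dvd_one.1 h1)
  -- geometric sums
  have hGS : ∀ i j : Fin n,
      ∑ k ∈ Finset.range n, (α ^ (i : ℕ) * (α⁻¹) ^ (j : ℕ)) ^ k
        = if i = j then (n : L) else 0 := by
    intro i j
    by_cases hij : i = j
    · subst hij
      rw [if_pos rfl]
      have h1 : α ^ (i : ℕ) * (α⁻¹) ^ (i : ℕ) = 1 := by
        rw [inv_pow, mul_inv_cancel₀ (pow_ne_zero _ hα0)]
      rw [h1]
      simp
    · rw [if_neg hij]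
      have hμn : (α ^ (i : ℕ) * (α⁻¹) ^ (j : ℕ)) ^ n = 1 := by
        rw [mul_pow, pow_right_comm α, hαn, one_pow, one_mul, pow_right_comm,
          inv_pow, hαn, inv_one, one_pow]
      have hμ1 : α ^ (i : ℕ) * (α⁻¹) ^ (j : ℕ) ≠ 1 := by
        intro h
        apply hij
        have h2 : (α⁻¹) ^ (j : ℕ) * α ^ (j : ℕ) = 1 := by
          rw [inv_pow, inv_mul_cancel₀ (pow_ne_zero _ hα0)]
        have h3 : α ^ (i : ℕ) = α ^ (j : ℕ) := by
          calc α ^ (i : ℕ) = α ^ (i : ℕ) * ((α⁻¹) ^ (j : ℕ) * α ^ (j : ℕ)) := by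
                rw [h2, mul_one]
            _ = (α ^ (i : ℕ) * (α⁻¹) ^ (j : ℕ)) * α ^ (j : ℕ) := by ring
            _ = α ^ (j : ℕ) := by rw [h, one_mul]
        exact Fin.ext (hα.pow_inj i.isLt j.isLt h3)
      exact geomSumZero hμn hμ1
  -- each k-term vanishes
  have hterm0 : ∀ k ∈ Finset.range n,
      (∑ i : Fin n, algebraMap K L (e i) * (α ^ (i : ℕ)) ^ k)
        * (∑ j : Fin n, algebraMap K L (w j) * β ^ (j : ℕ) * ((α⁻¹) ^ (j : ℕ)) ^ k) = 0 := by
    intro k _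
    by_cases hab : (α ^ k) ∈ A * B
    · have h0 := he (α ^ k) hab
      have h1 : ∑ i : Fin n, algebraMap K L (e i) * (α ^ (i : ℕ)) ^ k = 0 := by
        rw [← h0]
        exact Finset.sum_congr rfl (fun i _ => by rw [pow_right_comm])
      rw [h1, zero_mul]
    · have hγn : (α ^ k * β⁻¹) ^ n = 1 := by
        rw [mul_pow, pow_right_comm, hαn, one_pow, inv_pow, hβn, inv_one, mul_one]
      have hγA : (α ^ k * β⁻¹) ∉ A := by
        intro hmem
        apply hab
        have h1 : (α ^ k * β⁻¹) * β = α ^ k := by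
          rw [mul_assoc, inv_mul_cancel₀ hβ0, mul_one]
        exact h1 ▸ Set.mul_mem_mul hmem hβ
      have h0 := dualVanish hn hcop hAsub hA hw hγn hγA
      have hγinv : (α ^ k * β⁻¹)⁻¹ = β * (α⁻¹) ^ k := by
        rw [mul_inv, inv_inv, inv_pow, mul_comm]
      have h1 : ∑ j : Fin n, algebraMap K L (w j) * β ^ (j : ℕ) * ((α⁻¹) ^ (j : ℕ)) ^ k = 0 := by
        rw [← h0, hγinv]
        refine Finset.sum_congr rfl (fun j _ => ?_)
        rw [mul_pow β, pow_right_comm α⁻¹ k]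
        ring
      rw [h1, mul_zero]
  -- expansion identity
  have hexp : ∑ k ∈ Finset.range n,
      (∑ i : Fin n, algebraMap K L (e i) * (α ^ (i : ℕ)) ^ k)
        * (∑ j : Fin n, algebraMap K L (w j) * β ^ (j : ℕ) * ((α⁻¹) ^ (j : ℕ)) ^ k)
      = (n : L) * ∑ j : Fin n, (algebraMap K L) (w j * e j) * β ^ (j : ℕ) := by
    have h1 : ∀ k ∈ Finset.range n,
        (∑ i : Fin n, algebraMap K L (e i) * (α ^ (i : ℕ)) ^ k)
          * (∑ j : Fin n, algebraMap K L (w j) * β ^ (j : ℕ) * ((α⁻¹) ^ (j : ℕ)) ^ k)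
        = ∑ i : Fin n, ∑ j : Fin n,
            (algebraMap K L (e i) * (α ^ (i : ℕ)) ^ k)
              * (algebraMap K L (w j) * β ^ (j : ℕ) * ((α⁻¹) ^ (j : ℕ)) ^ k) :=
      fun k _ => Finset.sum_mul_sum _ _ _ _
    rw [Finset.sum_congr rfl h1, Finset.sum_comm]
    have h2 : ∀ i : Fin n, ∑ k ∈ Finset.range n, ∑ j : Fin n,
        (algebraMap K L (e i) * (α ^ (i : ℕ)) ^ k)
          * (algebraMap K L (w j) * β ^ (j : ℕ) * ((α⁻¹) ^ (j : ℕ)) ^ k)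
        = ∑ j : Fin n, ∑ k ∈ Finset.range n,
        (algebraMap K L (e i) * (α ^ (i : ℕ)) ^ k)
          * (algebraMap K L (w j) * β ^ (j : ℕ) * ((α⁻¹) ^ (j : ℕ)) ^ k) :=
      fun i => Finset.sum_comm
    rw [Finset.sum_congr rfl (fun i _ => h2 i)]
    have h3 : ∀ i j : Fin n, ∑ k ∈ Finset.range n,
        (algebraMap K L (e i) * (α ^ (i : ℕ)) ^ k)
          * (algebraMap K L (w j) * β ^ (j : ℕ) * ((α⁻¹) ^ (j : ℕ)) ^ k)
        = (algebraMap K L (e i) * (algebraMap K L (w j) * β ^ (j : ℕ)))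
            * (if i = j then (n : L) else 0) := by
      intro i j
      have h4 : ∀ k ∈ Finset.range n,
          (algebraMap K L (e i) * (α ^ (i : ℕ)) ^ k)
            * (algebraMap K L (w j) * β ^ (j : ℕ) * ((α⁻¹) ^ (j : ℕ)) ^ k)
          = (algebraMap K L (e i) * (algebraMap K L (w j) * β ^ (j : ℕ)))
              * ((α ^ (i : ℕ) * (α⁻¹) ^ (j : ℕ)) ^ k) := by
        intro k _
        rw [mul_pow (α ^ (i : ℕ))]
        ring
      rw [Finset.sum_congr rfl h4, ← Finset.mul_sum, hGS i j]
    rw [Finset.sum_congr rfl (fun i _ => Finset.sum_congr rfl (fun j _ => h3 i j))]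
    have h5 : ∀ i : Fin n, ∑ j : Fin n,
        (algebraMap K L (e i) * (algebraMap K L (w j) * β ^ (j : ℕ)))
          * (if i = j then (n : L) else 0)
        = (algebraMap K L (e i) * (algebraMap K L (w i) * β ^ (i : ℕ))) * (n : L) := by
      intro i
      rw [Finset.sum_eq_single i]
      · rw [if_pos rfl]
      · intro j _ hji
        rw [if_neg (fun h => hji h.symm), mul_zero]
      · intro h
        exact absurd (Finset.mem_univ i) h
    rw [Finset.sum_congr rfl (fun i _ => h5 i), Finset.mul_sum]
    refine Finset.sum_congr rfl (fun i _ => ?_)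
    rw [map_mul]
    ring
  have hnT : (n : L) * ∑ j : Fin n, (algebraMap K L) (w j * e j) * β ^ (j : ℕ) = 0 := by
    rw [← hexp]
    exact Finset.sum_eq_zero hterm0
  rcases mul_eq_zero.1 hnT with h | h
  · exact absurd h hnL
  · exact h

end Prod

/-- Corollary 3.5 of the paper: if `d_A⊥ > d_B` for the cyclic codes over
`F_q` with complete defining sets `A` and `B`, then the cyclic code over `F_q` with
complete defining set `AB` has `(d_A⊥ - d_B + 1, d_B)`-locality. -/
theorem stmt19 (K L : Type) [Field K] [Fintype K] [Field L] [Algebra K L]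
    (n : ℕ) (hn : 0 < n) (hcop : Nat.Coprime n (Fintype.card K))
    (α : L) (hα : IsPrimitiveRoot α n)
    (A B : Set L) (hAsub : A ⊆ {x : L | x ^ n = 1}) (hBsub : B ⊆ {x : L | x ^ n = 1})
    (hA : ∀ x ∈ A, x ^ Fintype.card K ∈ A)
    (hB : ∀ x ∈ B, x ^ Fintype.card K ∈ B)
    (dA dB : ℕ)
    (hdA : IsMinDist (dualSet K n (cyclicCodeOn K L n A : Set (Fin n → K))) dA)
    (hdB : IsMinDist (cyclicCodeOn K L n B : Set (Fin n → K)) dB)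
    (hgt : dB < dA) :
    HasLocality (cyclicCodeOn K L n (A * B) : Set (Fin n → K)) (dA - dB + 1) dB := by
  classical
  haveI : NeZero n := ⟨hn.ne'⟩
  intro i
  -- a minimum weight dual codeword
  obtain ⟨v, hv_mem, hv0, hvwt⟩ := hdA.1
  obtain ⟨j0, hj0⟩ := Function.ne_iff.1 hv0
  have hj0' : v j0 ≠ 0 := by simpa using hj0
  set t : Fin n := j0 - i with ht
  set w : Fin n → K := fun j => v (j + t) with hwdef
  have hwi : w i ≠ 0 := by
    have : i + t = j0 := by
      rw [ht, add_comm, sub_add_cancel]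
    rw [hwdef]
    simpa [this] using hj0'
  have hw_dual : w ∈ dualSet K n (cyclicCodeOn K L n A : Set (Fin n → K)) :=
    shiftDual hAsub hv_mem t
  -- the recovery set
  set S : Finset (Fin n) := Finset.univ.filter (fun j => w j ≠ 0) with hS
  have hiS : i ∈ S := by
    rw [hS, Finset.mem_filter]
    exact ⟨Finset.mem_univ i, hwi⟩
  have hScard : S.card = dA := by
    have h1 : S.card = wt v := by
      rw [hS, wt]
      refine Finset.card_equiv (Equiv.addRight t) (fun j => ?_)
      simp only [Finset.mem_filter, Finset.mem_univ, true_and, Equiv.coe_addRight]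
      exact Iff.rfl
    rw [h1, hvwt]
  refine ⟨S, hiS, ?_, ?_⟩
  · rw [hScard]
    omega
  · intro c hc c' hc' ⟨j, hjS, hjne⟩
    set e : Fin n → K := fun j => c j - c' j with he
    have he_mem : e ∈ cyclicCodeOn K L n (A * B) :=
      Submodule.sub_mem _ (SetLike.mem_coe.1 hc) (SetLike.mem_coe.1 hc')
    set u : Fin n → K := fun j => w j * e j with hu
    have hu_mem : u ∈ cyclicCodeOn K L n B :=
      prodMemB hn hcop hα hAsub hBsub hA hw_dual he_mem
    have hwj : w j ≠ 0 := by
      rw [hS, Finset.mem_filter] at hjS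
      exact hjS.2
    have huj : u j ≠ 0 := mul_ne_zero hwj (sub_ne_zero.2 hjne)
    have hu0 : u ≠ 0 := Function.ne_iff.2 ⟨j, by simpa using huj⟩
    have h1 : dB ≤ wt u := hdB.2 u (SetLike.mem_coe.2 hu_mem) hu0
    have h2 : wt u ≤ (S.filter (fun j => c j ≠ c' j)).card := by
      rw [wt]
      apply Finset.card_le_card
      intro j' hj'
      simp only [Finset.mem_filter, Finset.mem_univ, true_and] at hj'
      have hw' : w j' ≠ 0 := fun h => hj' (by rw [hu]; simp [h])
      have he' : e j' ≠ 0 := fun h => hj' (by rw [hu]; simp only; rw [h, mul_zero])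
      rw [Finset.mem_filter]
      refine ⟨?_, sub_ne_zero.1 he'⟩
      rw [hS, Finset.mem_filter]
      exact ⟨Finset.mem_univ j', hw'⟩
    omega
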